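/- Let σ > 0, t > 0, μ ∈ ℝ, and 0 < K ≤ K'. Set d₁ := (log(K/K') − μt)/(σ√t) and d₂ := (log(K/K') + μt)/(σ√t). Then ∫_ℝ [max(e^y − K', 0) − max(e^{2 log K − y} − K', 0)] · (2πσ²t)^{−1/2} exp(−(y − (log K + μt))²/(2σ²t)) dy = K'[𝒩(d₁) − 𝒩(d₂)] + K e^{σ²t/2} [e^{μt} 𝒩(d₂ + σ√t) − e^{−μt} 𝒩(d₁ + σ√t)]. (This is the first order hedging error He⁽¹⁾ with t = T − τ, i.e. the difference between the price of a call on e^{X} with strike K' and the price of the reflected claim (e^{2 log K − X} − K')⁺, where X is Gaussian with mean log K + μt and variance σ²t.) -/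

import Mathlib

open MeasureTheory

/-- The standard normal cumulative distribution function. -/
noncomputable def stdNormalCdf (x : ℝ) : ℝ :=
  ∫ u in Set.Iio x, (Real.sqrt (2 * Real.pi))⁻¹ * Real.exp (-u ^ 2 / 2)


section StdNormalAux
open Set

noncomputable def phi (u : ℝ) : ℝ := (Real.sqrt (2 * Real.pi))⁻¹ * Real.exp (-u ^ 2 / 2)

lemma phi_cont : Continuous phi := by
  unfold phi; fun_prop

lemma phi_integrable : Integrable phi := by
  have h : ∀ u : ℝ, phi u = (Real.sqrt (2 * Real.pi))⁻¹ * Real.exp (-(1/2 : ℝ) * u ^ 2) := by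
    intro u; unfold phi; ring_nf
  rw [funext h]
  exact (integrable_exp_neg_mul_sq (by norm_num : (0:ℝ) < 1/2)).const_mul _

lemma phi_total : ∫ u : ℝ, phi u = 1 := by
  have h : ∀ u : ℝ, phi u = (Real.sqrt (2 * Real.pi))⁻¹ * Real.exp (-(1/2 : ℝ) * u ^ 2) := by
    intro u; unfold phi; ring_nf
  simp_rw [h]
  rw [integral_const_mul, integral_gaussian]
  rw [show (Real.pi / (1/2)) = 2 * Real.pi by ring]
  rw [inv_mul_cancel₀]
  positivity

lemma stdNormalCdf' (x : ℝ) : (∫ u in Set.Iio x, phi u) = ∫ u in Set.Iio x,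
    (Real.sqrt (2 * Real.pi))⁻¹ * Real.exp (-u ^ 2 / 2) := rfl

lemma phi_Ioi (c : ℝ) : (∫ u in Set.Ioi c, phi u) = 1 - ∫ u in Set.Iio c, phi u := by
  have h := intervalIntegral.integral_Iic_add_Ioi (b := c) (μ := volume)
    phi_integrable.integrableOn phi_integrable.integrableOn
  rw [phi_total] at h
  rw [integral_Iic_eq_integral_Iio] at h
  linarith

lemma phi_even (u : ℝ) : phi (-u) = phi u := by unfold phi; ring_nf

lemma phi_Ioi' (c : ℝ) : (∫ u in Set.Ioi c, phi u) = ∫ u in Set.Iio (-c), phi u := by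
  have : (∫ u in Set.Ioi c, phi u) = ∫ u in Set.Ioi c, phi (-u) := by
    simp_rw [phi_even]
  rw [this, integral_comp_neg_Ioi, integral_Iic_eq_integral_Iio]

lemma phi_sym (c : ℝ) : (∫ u in Set.Iio (-c), phi u) = 1 - ∫ u in Set.Iio c, phi u := by
  rw [← phi_Ioi', phi_Ioi]

lemma shift_Ioi (c d : ℝ) (f : ℝ → ℝ) :
    (∫ x in Set.Ioi c, f (x + d)) = ∫ x in Set.Ioi (c + d), f x := by
  have A : MeasurableEmbedding fun x : ℝ => x + d :=
    (Homeomorph.addRight d).isClosedEmbedding.measurableEmbedding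
  have h := A.setIntegral_map (μ := volume) f (Set.Ioi (c + d))
  rw [map_add_right_eq_self volume d] at h
  rw [h, show (fun x : ℝ => x + d) ⁻¹' Set.Ioi (c + d) = Set.Ioi c by
    ext x; simp [Set.mem_Ioi]]

lemma exp_moment (b c : ℝ) :
    (∫ u in Set.Ioi c, Real.exp (b * u) * phi u)
      = Real.exp (b ^ 2 / 2) * ∫ u in Set.Iio (b - c), phi u := by
  have key : ∀ u : ℝ, Real.exp (b * u) * phi u = Real.exp (b ^ 2 / 2) * phi (u - b) := by
    intro u
    unfold phi
    rw [show (Real.sqrt (2 * Real.pi))⁻¹ * Real.exp (-u ^ 2 / 2)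
        = Real.exp (-u ^ 2 / 2) * (Real.sqrt (2 * Real.pi))⁻¹ by ring,
      show Real.exp (b ^ 2 / 2) * ((Real.sqrt (2 * Real.pi))⁻¹ * Real.exp (-(u - b) ^ 2 / 2))
        = Real.exp (b ^ 2 / 2) * Real.exp (-(u - b) ^ 2 / 2) * (Real.sqrt (2 * Real.pi))⁻¹ by ring,
      ← mul_assoc, ← Real.exp_add, ← Real.exp_add]
    congr 1
    ring_nf
  simp_rw [key]
  rw [integral_const_mul]
  congr 1
  have : ∀ u : ℝ, phi (u - b) = (fun x => phi x) (u + (-b)) := by intro u; simp [sub_eq_add_neg]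
  simp_rw [this]
  rw [shift_Ioi c (-b) phi, phi_Ioi']
  congr 1
  ring_nf

lemma phi_shift (b : ℝ) : ∀ u : ℝ, Real.exp (b * u) * phi u = Real.exp (b ^ 2 / 2) * phi (u - b) := by
  intro u
  unfold phi
  rw [show (Real.sqrt (2 * Real.pi))⁻¹ * Real.exp (-u ^ 2 / 2)
      = Real.exp (-u ^ 2 / 2) * (Real.sqrt (2 * Real.pi))⁻¹ by ring,
    show Real.exp (b ^ 2 / 2) * ((Real.sqrt (2 * Real.pi))⁻¹ * Real.exp (-(u - b) ^ 2 / 2))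
      = Real.exp (b ^ 2 / 2) * Real.exp (-(u - b) ^ 2 / 2) * (Real.sqrt (2 * Real.pi))⁻¹ by ring,
    ← mul_assoc, ← Real.exp_add, ← Real.exp_add]
  congr 1
  ring_nf

lemma gauss_lin_integrable (b : ℝ) : Integrable (fun u => Real.exp (b * u) * phi u) := by
  rw [funext (phi_shift b)]
  exact (phi_integrable.comp_sub_right b).const_mul _

lemma callA (s m a : ℝ) (hs : 0 < s) :
    (∫ y : ℝ, max (Real.exp y - Real.exp a) 0
        * ((Real.sqrt (2 * Real.pi) * s)⁻¹ * Real.exp (-(y - m) ^ 2 / (2 * s ^ 2))))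
      = Real.exp (m + s ^ 2 / 2) * (∫ u in Set.Iio ((m - a) / s + s), phi u)
        - Real.exp a * ∫ u in Set.Iio ((m - a) / s), phi u := by
  set f : ℝ → ℝ := fun y => max (Real.exp y - Real.exp a) 0
      * ((Real.sqrt (2 * Real.pi) * s)⁻¹ * Real.exp (-(y - m) ^ 2 / (2 * s ^ 2))) with hf
  have hsub : (∫ y : ℝ, f y) = s * ∫ u : ℝ, f (s * u + m) := by
    have h1 : (∫ u : ℝ, f (s * u + m)) = |s⁻¹| • ∫ x : ℝ, f (x + m) :=
      MeasureTheory.Measure.integral_comp_mul_left (fun x => f (x + m)) s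
    rw [integral_add_right_eq_self f m] at h1
    rw [h1, abs_of_pos (inv_pos.mpr hs), smul_eq_mul, ← mul_assoc,
      mul_inv_cancel₀ hs.ne', one_mul]
  have h2 : ∀ u : ℝ, f (s * u + m)
      = s⁻¹ * (max (Real.exp (s * u + m) - Real.exp a) 0 * phi u) := by
    intro u
    rw [hf]
    simp only [add_sub_cancel_right]
    rw [show -(s * u) ^ 2 / (2 * s ^ 2) = -u ^ 2 / 2 by
      field_simp]
    unfold phi
    rw [mul_inv]
    ring
  rw [hsub, funext h2, integral_const_mul, ← mul_assoc, mul_inv_cancel₀ hs.ne', one_mul]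
  set c : ℝ := (a - m) / s with hc
  have h3 : ∀ u : ℝ, max (Real.exp (s * u + m) - Real.exp a) 0 * phi u
      = Set.indicator (Set.Ioi c) (fun u => (Real.exp (s * u + m) - Real.exp a) * phi u) u := by
    intro u
    by_cases hu : u ∈ Set.Ioi c
    · rw [Set.indicator_of_mem hu]
      congr 1
      rw [max_eq_left]
      rw [sub_nonneg, Real.exp_le_exp]
      rw [Set.mem_Ioi, hc, div_lt_iff₀ hs] at hu
      linarith
    · rw [Set.indicator_of_notMem hu]
      rw [Set.mem_Ioi, not_lt, hc, le_div_iff₀ hs] at hu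
      rw [max_eq_right, zero_mul]
      rw [sub_nonpos, Real.exp_le_exp]
      linarith
  rw [funext h3, integral_indicator measurableSet_Ioi]
  have h4 : ∀ u : ℝ, (Real.exp (s * u + m) - Real.exp a) * phi u
      = Real.exp m * (Real.exp (s * u) * phi u) - Real.exp a * phi u := by
    intro u
    rw [Real.exp_add]
    ring
  rw [funext h4, integral_sub (((gauss_lin_integrable s).const_mul _).integrableOn)
    ((phi_integrable.const_mul _).integrableOn), integral_const_mul, integral_const_mul,
    exp_moment, phi_Ioi']
  rw [show s - c = (m - a) / s + s by rw [hc]; field_simp; ring,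
    show -c = (m - a) / s by rw [hc]; field_simp; ring,
    ← mul_assoc, ← Real.exp_add]

lemma D_integrable (s m : ℝ) (hs : 0 < s) :
    Integrable (fun y : ℝ => (Real.sqrt (2 * Real.pi) * s)⁻¹
      * Real.exp (-(y - m) ^ 2 / (2 * s ^ 2))) := by
  have h : ∀ y : ℝ, (Real.sqrt (2 * Real.pi) * s)⁻¹ * Real.exp (-(y - m) ^ 2 / (2 * s ^ 2))
      = (Real.sqrt (2 * Real.pi) * s)⁻¹ * Real.exp (-(1 / (2 * s ^ 2)) * (y - m) ^ 2) := by
    intro y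
    congr 1
    rw [show -(1 / (2 * s ^ 2)) * (y - m) ^ 2 = -(y - m) ^ 2 / (2 * s ^ 2) by ring]
  rw [funext h]
  exact ((integrable_exp_neg_mul_sq (by positivity)).comp_sub_right m).const_mul _

lemma explin_D_integrable (b β s m : ℝ) (hs : 0 < s) :
    Integrable (fun y : ℝ => Real.exp (b * y + β) * ((Real.sqrt (2 * Real.pi) * s)⁻¹
      * Real.exp (-(y - m) ^ 2 / (2 * s ^ 2)))) := by
  have h : ∀ y : ℝ, Real.exp (b * y + β) * ((Real.sqrt (2 * Real.pi) * s)⁻¹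
        * Real.exp (-(y - m) ^ 2 / (2 * s ^ 2)))
      = (Real.exp (β + b * m + b ^ 2 * s ^ 2 / 2) * (Real.sqrt (2 * Real.pi) * s)⁻¹)
        * Real.exp (-(1 / (2 * s ^ 2)) * (y - (m + b * s ^ 2)) ^ 2) := by
    intro y
    rw [show Real.exp (b * y + β) * ((Real.sqrt (2 * Real.pi) * s)⁻¹
          * Real.exp (-(y - m) ^ 2 / (2 * s ^ 2)))
        = Real.exp (b * y + β) * Real.exp (-(y - m) ^ 2 / (2 * s ^ 2))
          * (Real.sqrt (2 * Real.pi) * s)⁻¹ by ring,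
      show (Real.exp (β + b * m + b ^ 2 * s ^ 2 / 2) * (Real.sqrt (2 * Real.pi) * s)⁻¹)
          * Real.exp (-(1 / (2 * s ^ 2)) * (y - (m + b * s ^ 2)) ^ 2)
        = Real.exp (β + b * m + b ^ 2 * s ^ 2 / 2)
          * Real.exp (-(1 / (2 * s ^ 2)) * (y - (m + b * s ^ 2)) ^ 2)
          * (Real.sqrt (2 * Real.pi) * s)⁻¹ by ring,
      ← Real.exp_add, ← Real.exp_add]
    congr 1
    field_simp
    ring
  rw [funext h]
  exact ((integrable_exp_neg_mul_sq (by positivity)).comp_sub_right _).const_mul _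

lemma max_integrable (b β c s m : ℝ) (hs : 0 < s) :
    Integrable (fun y : ℝ => max (Real.exp (b * y + β) - c) 0
      * ((Real.sqrt (2 * Real.pi) * s)⁻¹ * Real.exp (-(y - m) ^ 2 / (2 * s ^ 2)))) := by
  apply Integrable.mono' (g := fun y : ℝ => (Real.exp (b * y + β) + |c|)
    * ((Real.sqrt (2 * Real.pi) * s)⁻¹ * Real.exp (-(y - m) ^ 2 / (2 * s ^ 2))))
  · have h : ∀ y : ℝ, (Real.exp (b * y + β) + |c|)
        * ((Real.sqrt (2 * Real.pi) * s)⁻¹ * Real.exp (-(y - m) ^ 2 / (2 * s ^ 2)))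
        = Real.exp (b * y + β) * ((Real.sqrt (2 * Real.pi) * s)⁻¹
            * Real.exp (-(y - m) ^ 2 / (2 * s ^ 2)))
          + |c| * ((Real.sqrt (2 * Real.pi) * s)⁻¹
            * Real.exp (-(y - m) ^ 2 / (2 * s ^ 2))) := by
      intro y; ring
    rw [funext h]
    exact (explin_D_integrable b β s m hs).add ((D_integrable s m hs).const_mul _)
  · apply Continuous.aestronglyMeasurable
    fun_prop
  · filter_upwards with y
    have hD : (0:ℝ) ≤ (Real.sqrt (2 * Real.pi) * s)⁻¹ * Real.exp (-(y - m) ^ 2 / (2 * s ^ 2)) := by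
      positivity
    rw [norm_mul, Real.norm_eq_abs, Real.norm_eq_abs, abs_of_nonneg (le_max_right _ _),
      abs_of_nonneg hD]
    apply mul_le_mul_of_nonneg_right _ hD
    apply max_le
    · have := neg_abs_le c; linarith
    · positivity

lemma stdN_eq (x : ℝ) : (∫ u in Set.Iio x,
    (Real.sqrt (2 * Real.pi))⁻¹ * Real.exp (-u ^ 2 / 2)) = ∫ u in Set.Iio x, phi u := rfl

theorem stmt_15_aux (σ t μ K K' : ℝ) (hσ : 0 < σ) (ht : 0 < t) (hK : 0 < K) (hKK' : K ≤ K') :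
    (∫ y : ℝ, (max (Real.exp y - K') 0 - max (Real.exp (2 * Real.log K - y) - K') 0)
        * ((Real.sqrt (2 * Real.pi * σ ^ 2 * t))⁻¹
          * Real.exp (-(y - (Real.log K + μ * t)) ^ 2 / (2 * σ ^ 2 * t))))
      = K' * ((∫ u in Set.Iio ((Real.log (K / K') - μ * t) / (σ * Real.sqrt t)),
                (Real.sqrt (2 * Real.pi))⁻¹ * Real.exp (-u ^ 2 / 2))
              - ∫ u in Set.Iio ((Real.log (K / K') + μ * t) / (σ * Real.sqrt t)),
                (Real.sqrt (2 * Real.pi))⁻¹ * Real.exp (-u ^ 2 / 2))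
        + K * Real.exp (σ ^ 2 * t / 2)
          * (Real.exp (μ * t)
              * (∫ u in Set.Iio ((Real.log (K / K') + μ * t) / (σ * Real.sqrt t) + σ * Real.sqrt t),
                (Real.sqrt (2 * Real.pi))⁻¹ * Real.exp (-u ^ 2 / 2))
            - Real.exp (-(μ * t))
              * ∫ u in Set.Iio ((Real.log (K / K') - μ * t) / (σ * Real.sqrt t) + σ * Real.sqrt t),
                (Real.sqrt (2 * Real.pi))⁻¹ * Real.exp (-u ^ 2 / 2)) := by
  have hK' : 0 < K' := lt_of_lt_of_le hK hKK'
  have hst : 0 < σ * Real.sqrt t := by positivity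
  have hsqrt : Real.sqrt (2 * Real.pi * σ ^ 2 * t)
      = Real.sqrt (2 * Real.pi) * (σ * Real.sqrt t) := by
    rw [show 2 * Real.pi * σ ^ 2 * t = (2 * Real.pi) * (σ * Real.sqrt t) ^ 2 by
        rw [mul_pow, Real.sq_sqrt ht.le]; ring,
      Real.sqrt_mul (by positivity), Real.sqrt_sq hst.le]
  have hvar : 2 * σ ^ 2 * t = 2 * (σ * Real.sqrt t) ^ 2 := by
    rw [mul_pow, Real.sq_sqrt ht.le]; ring
  simp only [hsqrt, hvar]
  -- split the integral
  have h1 : Integrable (fun y : ℝ => max (Real.exp y - K') 0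
      * ((Real.sqrt (2 * Real.pi) * (σ * Real.sqrt t))⁻¹
        * Real.exp (-(y - (Real.log K + μ * t)) ^ 2 / (2 * (σ * Real.sqrt t) ^ 2)))) := by
    have := max_integrable 1 0 K' (σ * Real.sqrt t) (Real.log K + μ * t) hst
    simpa using this
  have h2 : Integrable (fun y : ℝ => max (Real.exp (2 * Real.log K - y) - K') 0
      * ((Real.sqrt (2 * Real.pi) * (σ * Real.sqrt t))⁻¹
        * Real.exp (-(y - (Real.log K + μ * t)) ^ 2 / (2 * (σ * Real.sqrt t) ^ 2)))) := by
    have := max_integrable (-1) (2 * Real.log K) K' (σ * Real.sqrt t) (Real.log K + μ * t) hst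
    have e : ∀ y : ℝ, (-1 : ℝ) * y + 2 * Real.log K = 2 * Real.log K - y := by intro y; ring
    simpa only [e] using this
  rw [show (fun y : ℝ => (max (Real.exp y - K') 0 - max (Real.exp (2 * Real.log K - y) - K') 0)
        * ((Real.sqrt (2 * Real.pi) * (σ * Real.sqrt t))⁻¹
          * Real.exp (-(y - (Real.log K + μ * t)) ^ 2 / (2 * (σ * Real.sqrt t) ^ 2))))
      = fun y : ℝ => max (Real.exp y - K') 0
          * ((Real.sqrt (2 * Real.pi) * (σ * Real.sqrt t))⁻¹
            * Real.exp (-(y - (Real.log K + μ * t)) ^ 2 / (2 * (σ * Real.sqrt t) ^ 2)))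
        - max (Real.exp (2 * Real.log K - y) - K') 0
          * ((Real.sqrt (2 * Real.pi) * (σ * Real.sqrt t))⁻¹
            * Real.exp (-(y - (Real.log K + μ * t)) ^ 2 / (2 * (σ * Real.sqrt t) ^ 2)))
      from funext fun y => by ring, integral_sub h1 h2]
  -- reflection for the second integral
  have hrefl : (∫ y : ℝ, max (Real.exp (2 * Real.log K - y) - K') 0
        * ((Real.sqrt (2 * Real.pi) * (σ * Real.sqrt t))⁻¹
          * Real.exp (-(y - (Real.log K + μ * t)) ^ 2 / (2 * (σ * Real.sqrt t) ^ 2))))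
      = ∫ y : ℝ, max (Real.exp y - K') 0
        * ((Real.sqrt (2 * Real.pi) * (σ * Real.sqrt t))⁻¹
          * Real.exp (-(y - (Real.log K - μ * t)) ^ 2 / (2 * (σ * Real.sqrt t) ^ 2))) := by
    have hp : ∀ y : ℝ, max (Real.exp (2 * Real.log K - y) - K') 0
        * ((Real.sqrt (2 * Real.pi) * (σ * Real.sqrt t))⁻¹
          * Real.exp (-(y - (Real.log K + μ * t)) ^ 2 / (2 * (σ * Real.sqrt t) ^ 2)))
        = (fun x : ℝ => (fun z : ℝ => max (Real.exp z - K') 0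
            * ((Real.sqrt (2 * Real.pi) * (σ * Real.sqrt t))⁻¹
              * Real.exp (-(z - (Real.log K - μ * t)) ^ 2 / (2 * (σ * Real.sqrt t) ^ 2))))
            (2 * Real.log K + x)) (-y) := by
      intro y
      simp only
      rw [show 2 * Real.log K + -y = 2 * Real.log K - y by ring,
        show -(2 * Real.log K - y - (Real.log K - μ * t)) ^ 2 / (2 * (σ * Real.sqrt t) ^ 2)
          = -(y - (Real.log K + μ * t)) ^ 2 / (2 * (σ * Real.sqrt t) ^ 2) by ring]
    rw [funext hp]
    have g1 := integral_neg_eq_self (μ := volume) (f := fun x : ℝ =>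
      (fun z : ℝ => max (Real.exp z - K') 0
        * ((Real.sqrt (2 * Real.pi) * (σ * Real.sqrt t))⁻¹
          * Real.exp (-(z - (Real.log K - μ * t)) ^ 2 / (2 * (σ * Real.sqrt t) ^ 2))))
        (2 * Real.log K + x))
    rw [g1]
    exact integral_add_left_eq_self (μ := volume) (fun z : ℝ => max (Real.exp z - K') 0
        * ((Real.sqrt (2 * Real.pi) * (σ * Real.sqrt t))⁻¹
          * Real.exp (-(z - (Real.log K - μ * t)) ^ 2 / (2 * (σ * Real.sqrt t) ^ 2))))
      (2 * Real.log K)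
  rw [hrefl]
  have hA1 := callA (σ * Real.sqrt t) (Real.log K + μ * t) (Real.log K') hst
  rw [Real.exp_log hK'] at hA1
  have hA2 := callA (σ * Real.sqrt t) (Real.log K - μ * t) (Real.log K') hst
  rw [Real.exp_log hK'] at hA2
  rw [hA1, hA2]
  simp only [Real.log_div hK.ne' hK'.ne', stdN_eq]
  rw [show Real.log K - Real.log K' - μ * t = Real.log K - μ * t - Real.log K' by ring,
    show Real.log K - Real.log K' + μ * t = Real.log K + μ * t - Real.log K' by ring,
    show Real.log K + μ * t + (σ * Real.sqrt t) ^ 2 / 2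
      = Real.log K + (μ * t + σ ^ 2 * t / 2) by rw [mul_pow, Real.sq_sqrt ht.le]; ring,
    show Real.log K - μ * t + (σ * Real.sqrt t) ^ 2 / 2
      = Real.log K + (-(μ * t) + σ ^ 2 * t / 2) by rw [mul_pow, Real.sq_sqrt ht.le]; ring,
  ]
  simp only [Real.exp_add, Real.exp_log hK]
  ring

end StdNormalAux

/-- First order hedging error in closed form: for `σ, t > 0`, `μ ∈ ℝ`,
`0 < K ≤ K'`, with `d₁ := (log(K/K') − μt)/(σ√t)`, `d₂ := (log(K/K') + μt)/(σ√t)`,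
`∫ [max(e^y−K',0) − max(e^{2 log K − y}−K',0)] (2πσ²t)^{−1/2} e^{−(y−(log K+μt))²/(2σ²t)} dy
 = K'[𝒩(d₁) − 𝒩(d₂)] + K e^{σ²t/2}[e^{μt} 𝒩(d₂+σ√t) − e^{−μt} 𝒩(d₁+σ√t)]`. -/
theorem stmt_15 (σ t μ K K' : ℝ) (hσ : 0 < σ) (ht : 0 < t) (hK : 0 < K) (hKK' : K ≤ K') :
    (∫ y : ℝ, (max (Real.exp y - K') 0 - max (Real.exp (2 * Real.log K - y) - K') 0)
        * ((Real.sqrt (2 * Real.pi * σ ^ 2 * t))⁻¹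
          * Real.exp (-(y - (Real.log K + μ * t)) ^ 2 / (2 * σ ^ 2 * t))))
      = K' * (stdNormalCdf ((Real.log (K / K') - μ * t) / (σ * Real.sqrt t))
              - stdNormalCdf ((Real.log (K / K') + μ * t) / (σ * Real.sqrt t)))
        + K * Real.exp (σ ^ 2 * t / 2)
          * (Real.exp (μ * t)
              * stdNormalCdf ((Real.log (K / K') + μ * t) / (σ * Real.sqrt t) + σ * Real.sqrt t)
            - Real.exp (-(μ * t))
              * stdNormalCdf ((Real.log (K / K') - μ * t) / (σ * Real.sqrt t) + σ * Real.sqrt t)) := by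
  unfold stdNormalCdf
  exact stmt_15_aux σ t μ K K' hσ ht hK hKK'
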